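/- Let H = H_1 ⊕ H_2 be an orthogonal decomposition of a separable Hilbert space. Then there is a unitary isomorphism U : Γ(H) → Γ(H_1) ⊗ Γ(H_2) such that U φ_{f_1 ⊕ f_2} = φ_{f_1} ⊗ φ_{f_2} for all f_1 ∈ H_1, f_2 ∈ H_2 (exponential property of the Fock space). -/

import Mathlib

/- Exponential property of Fock space: Γ(H₁ ⊕ H₂) ≅ Γ(H₁) ⊗ Γ(H₂) via a
unitary U with U φ_{f₁⊕f₂} = φ_{f₁} ⊗ φ_{f₂}.  The three Fock spaces are
modelled abstractly: F over H = H₁ ⊕₂ H₂ (the Hilbert direct sum, `WithLp 2`),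
F₁ over H₁, F₂ over H₂, each with its exponential-vector map and the
characterizing inner-product formula; the Hilbert tensor product Γ(H₁)⊗Γ(H₂)
is modelled by a Hilbert space F₁₂ with a continuous bilinear map `tp`
satisfying ⟪a⊗b, c⊗d⟫ = ⟪a,c⟫⟪b,d⟫, with exponential (product) vectors total
on both sides. -/
open scoped InnerProductSpace

private theorem exists_isometry_of_inner {ι E E' : Type*}
    [NormedAddCommGroup E] [InnerProductSpace ℂ E] [CompleteSpace E]
    [NormedAddCommGroup E'] [InnerProductSpace ℂ E'] [CompleteSpace E']
    (s : ι → E) (t : ι → E')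
    (hinner : ∀ i j, ⟪s i, s j⟫_ℂ = ⟪t i, t j⟫_ℂ)
    (hs : (Submodule.span ℂ (Set.range s)).topologicalClosure = ⊤) :
    ∃ T : E →L[ℂ] E', (∀ x, ‖T x‖ = ‖x‖) ∧ ∀ i, T (s i) = t i := by
  set L1 := Finsupp.linearCombination ℂ s with hL1
  set L2 := Finsupp.linearCombination ℂ t with hL2
  have key : ∀ x y : ι →₀ ℂ, ⟪L1 x, L1 y⟫_ℂ = ⟪L2 x, L2 y⟫_ℂ := by
    intro x y
    simp only [hL1, hL2, Finsupp.linearCombination_apply, Finsupp.sum, sum_inner, inner_sum,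
      inner_smul_left, inner_smul_right, hinner]
  have hnorm : ∀ x : ι →₀ ℂ, ‖L1 x‖ = ‖L2 x‖ := by
    intro x
    rw [norm_eq_sqrt_re_inner (𝕜 := ℂ), norm_eq_sqrt_re_inner (𝕜 := ℂ), key]
  have hker : LinearMap.ker L1 ≤ LinearMap.ker L2 := by
    intro x hx
    rw [LinearMap.mem_ker] at hx ⊢
    have := hnorm x
    rw [hx, norm_zero] at this
    exact norm_eq_zero.mp this.symm
  set T0 : ((ι →₀ ℂ) ⧸ LinearMap.ker L1) →ₗ[ℂ] E' := (LinearMap.ker L1).liftQ L2 hker with hT0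
  set e : ((ι →₀ ℂ) ⧸ LinearMap.ker L1) ≃ₗ[ℂ] LinearMap.range L1 :=
    LinearMap.quotKerEquivRange L1 with he
  set Tlin : ↥(LinearMap.range L1) →ₗ[ℂ] E' := T0.comp e.symm.toLinearMap with hTlin
  have hT : ∀ (x : ι →₀ ℂ) (h : L1 x ∈ LinearMap.range L1),
      Tlin ⟨L1 x, h⟩ = L2 x := by
    intro x h
    have h1 : (⟨L1 x, h⟩ : LinearMap.range L1) = e (Submodule.Quotient.mk x) := by
      ext
      rw [he, LinearMap.quotKerEquivRange_apply_mk]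
    rw [h1, hTlin]
    simp [hT0]
  have hTiso : ∀ v : ↥(LinearMap.range L1), ‖Tlin v‖ = ‖v‖ := by
    rintro ⟨v, x, rfl⟩
    rw [hT x ⟨x, rfl⟩]
    exact (hnorm x).symm
  set Tli : ↥(LinearMap.range L1) →ₗᵢ[ℂ] E' := ⟨Tlin, hTiso⟩ with hTli
  have hrange : LinearMap.range L1 = Submodule.span ℂ (Set.range s) :=
    Finsupp.range_linearCombination ℂ (v := s)
  have hdense : DenseRange ((LinearMap.range L1).subtypeL) := by
    have : Dense ((LinearMap.range L1 : Submodule ℂ E) : Set E) := by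
      rw [hrange]
      exact Submodule.dense_iff_topologicalClosure_eq_top.mpr hs
    simp only [DenseRange, Subtype.range_coe, LinearMap.coe_range] at this ⊢
    simp only [Submodule.coe_subtypeL', Submodule.coe_subtype, Subtype.range_coe_subtype,
      SetLike.setOf_mem_eq, LinearMap.coe_range]
    exact this
  have hind : IsUniformInducing ((LinearMap.range L1).subtypeL) :=
    isometry_subtype_coe.isUniformInducing
  set Tbar : E →L[ℂ] E' :=
    (Tli.toContinuousLinearMap).extend (LinearMap.range L1).subtypeL with hTbar
  have hTbar_eq : ∀ v : ↥(LinearMap.range L1), Tbar v = Tlin v := by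
    intro v
    exact ContinuousLinearMap.extend_eq _ hdense hind v
  refine ⟨Tbar, ?_, ?_⟩
  · have hclosed : IsClosed {x : E | ‖Tbar x‖ = ‖x‖} :=
      isClosed_eq (continuous_norm.comp Tbar.continuous) continuous_norm
    have hd : Dense {x : E | ‖Tbar x‖ = ‖x‖} := by
      refine Dense.mono ?_ hdense
      rintro x ⟨v, rfl⟩
      rw [Set.mem_setOf_eq]
      rw [show ((LinearMap.range L1).subtypeL v : E) = (v : E) from rfl, hTbar_eq v,
        hTiso v]
      rfl
    intro x
    exact hclosed.closure_subset (by rw [hd.closure_eq]; trivial)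
  · intro i
    have hsi : s i = L1 (Finsupp.single i 1) := by
      simp [hL1]
    have hmem : s i ∈ LinearMap.range L1 := ⟨Finsupp.single i 1, hsi.symm⟩
    have : Tbar (s i) = Tlin ⟨s i, hmem⟩ := hTbar_eq ⟨s i, hmem⟩
    rw [this]
    have : (⟨s i, hmem⟩ : LinearMap.range L1) = ⟨L1 (Finsupp.single i 1), LinearMap.mem_range_self _ _⟩ := by
      ext; exact hsi
    rw [this, hT]
    simp [hL2]



theorem stmt_15 {H1 H2 F F1 F2 F12 : Type*}
    [NormedAddCommGroup H1] [InnerProductSpace ℂ H1]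
    [NormedAddCommGroup H2] [InnerProductSpace ℂ H2]
    [NormedAddCommGroup F] [InnerProductSpace ℂ F] [CompleteSpace F]
    [NormedAddCommGroup F1] [InnerProductSpace ℂ F1] [CompleteSpace F1]
    [NormedAddCommGroup F2] [InnerProductSpace ℂ F2] [CompleteSpace F2]
    [NormedAddCommGroup F12] [InnerProductSpace ℂ F12] [CompleteSpace F12]
    (expVec : WithLp 2 (H1 × H2) → F) (exp1 : H1 → F1) (exp2 : H2 → F2)
    (tp : F1 →L[ℂ] F2 →L[ℂ] F12)
    (hexp : ∀ f g : WithLp 2 (H1 × H2),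
      ⟪expVec f, expVec g⟫_ℂ = Complex.exp ⟪f, g⟫_ℂ)
    (hexp1 : ∀ f g : H1, ⟪exp1 f, exp1 g⟫_ℂ = Complex.exp ⟪f, g⟫_ℂ)
    (hexp2 : ∀ f g : H2, ⟪exp2 f, exp2 g⟫_ℂ = Complex.exp ⟪f, g⟫_ℂ)
    (htp : ∀ (a c : F1) (b d : F2), ⟪tp a b, tp c d⟫_ℂ = ⟪a, c⟫_ℂ * ⟪b, d⟫_ℂ)
    (htotal : (Submodule.span ℂ (Set.range expVec)).topologicalClosure = ⊤)
    (htotal12 : (Submodule.span ℂ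
        {z : F12 | ∃ f1 f2, z = tp (exp1 f1) (exp2 f2)}).topologicalClosure = ⊤) :
    ∃ U : F ≃ₗᵢ[ℂ] F12, ∀ (f1 : H1) (f2 : H2),
      U (expVec ((WithLp.equiv 2 (H1 × H2)).symm (f1, f2)))
        = tp (exp1 f1) (exp2 f2) := by
  set s : H1 × H2 → F := fun p => expVec ((WithLp.equiv 2 (H1 × H2)).symm p) with hsdef
  set t : H1 × H2 → F12 := fun p => tp (exp1 p.1) (exp2 p.2) with htdef
  have hinner : ∀ p q, ⟪s p, s q⟫_ℂ = ⟪t p, t q⟫_ℂ := by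
    intro p q
    rw [hsdef, htdef]
    simp only
    rw [hexp, htp, hexp1, hexp2, ← Complex.exp_add]
    congr 1
  have hranges : Set.range s = Set.range expVec := by
    have : s = expVec ∘ (WithLp.equiv 2 (H1 × H2)).symm := rfl
    rw [this, Set.range_comp, Set.range_eq_univ.mpr
      (WithLp.equiv 2 (H1 × H2)).symm.surjective, Set.image_univ]
  have hranget : Set.range t = {z : F12 | ∃ f1 f2, z = tp (exp1 f1) (exp2 f2)} := by
    ext z
    constructor
    · rintro ⟨p, rfl⟩; exact ⟨p.1, p.2, rfl⟩
    · rintro ⟨f1, f2, rfl⟩; exact ⟨(f1, f2), rfl⟩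
  have hdenseS : Dense ((Submodule.span ℂ (Set.range s) : Submodule ℂ F) : Set F) := by
    rw [hranges]
    exact Submodule.dense_iff_topologicalClosure_eq_top.mpr htotal
  have hdenseT : Dense ((Submodule.span ℂ (Set.range t) : Submodule ℂ F12) : Set F12) := by
    rw [hranget]
    exact Submodule.dense_iff_topologicalClosure_eq_top.mpr htotal12
  obtain ⟨T, hTnorm, hTs⟩ := exists_isometry_of_inner s t hinner
    (Submodule.dense_iff_topologicalClosure_eq_top.mp hdenseS)
  obtain ⟨S, hSnorm, hSt⟩ := exists_isometry_of_inner t s (fun p q => (hinner p q).symm)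
    (Submodule.dense_iff_topologicalClosure_eq_top.mp hdenseT)
  have hST : Function.LeftInverse S T := by
    have : S.comp T = ContinuousLinearMap.id ℂ F := by
      apply ContinuousLinearMap.ext_on hdenseS
      rintro x ⟨p, rfl⟩
      simp [hTs p, hSt p]
    intro x
    exact DFunLike.congr_fun this x
  have hTS : Function.RightInverse S T := by
    have : T.comp S = ContinuousLinearMap.id ℂ F12 := by
      apply ContinuousLinearMap.ext_on hdenseT
      rintro x ⟨p, rfl⟩
      simp [hTs p, hSt p]
    intro x
    exact DFunLike.congr_fun this x
  set U : F ≃L[ℂ] F12 := ContinuousLinearEquiv.equivOfInverse T S hST hTS with hU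
  refine ⟨⟨U.toLinearEquiv, fun x => hTnorm x⟩, ?_⟩
  intro f1 f2
  exact hTs (f1, f2)
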